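/- arXiv:2304.12264 — 2 statements merged into one kernel-verified Lean document; each statement's English description precedes it below -/
import Mathlib

section
/- Let f : ℝ → ℝ be compactly supported and sufficiently regular (e.g. continuously differentiable), and suppose its Hilbert transform H[f] is well defined, i.e. for every x ∈ ℝ the principal value (1/π) lim_{ε→0⁺} ∫_{|x−t|>ε} f(t)/(x−t) dt exists and equals H[f](x). Then ∫_ℝ x f(x) H[f](x) dx = (1/(2π)) (∫_ℝ f(x) dx)². -/
open MeasureTheory Filter Set

namespace HilbertMomentAux

lemma odd_cancel (x ε : ℝ) :
    ∫ t in {t : ℝ | ε < |x - t| ∧ |x - t| ≤ 1}, (x - t)⁻¹ = 0 := by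
  set φ : ℝ → ℝ := fun u => Set.indicator {u : ℝ | ε < |u| ∧ |u| ≤ 1} (fun u => u⁻¹) u with hφ
  have hmeas' : MeasurableSet {t : ℝ | ε < |x - t| ∧ |x - t| ≤ 1} :=
    (measurableSet_lt measurable_const (measurable_const.sub measurable_id).abs).inter
      (measurableSet_le (measurable_const.sub measurable_id).abs measurable_const)
  have h1 : ∫ t in {t : ℝ | ε < |x - t| ∧ |x - t| ≤ 1}, (x - t)⁻¹ = ∫ t, φ (x - t) := by
    have heq : ∀ t : ℝ,
        Set.indicator {t : ℝ | ε < |x - t| ∧ |x - t| ≤ 1} (fun t => (x - t)⁻¹) t = φ (x - t) := by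
      intro t; by_cases h : ε < |x - t| ∧ |x - t| ≤ 1 <;> simp [hφ, Set.indicator, h]
    rw [← integral_indicator hmeas']
    exact integral_congr_ae (ae_of_all _ heq)
  have h2 : ∫ t, φ (x - t) = ∫ u, φ u := integral_sub_left_eq_self φ volume x
  have h3 : ∀ u, φ (-u) = - φ u := by
    intro u
    by_cases h : ε < |u| ∧ |u| ≤ 1 <;> simp [hφ, Set.indicator, abs_neg, h, inv_neg]
  have h4 : ∫ u, φ u = - ∫ u, φ u := by
    conv_lhs => rw [← integral_neg_eq_self φ volume]
    simp_rw [h3]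
    exact integral_neg φ
  rw [h1, h2]; linarith

lemma abs_trunc_le (f : ℝ → ℝ) (hf : Continuous f) (hfi : Integrable f)
    {B M : ℝ} (hM0 : 0 ≤ M) (hB : ∀ t, |f t| ≤ B)
    (hLip : ∀ a b : ℝ, |f b - f a| ≤ M * |b - a|)
    {ε : ℝ} (hε : 0 < ε) (hε1 : ε ≤ 1) (x : ℝ) :
    |∫ t in {t : ℝ | ε < |x - t|}, f t / (x - t)| ≤ 2 * M + ∫ t, |f t| := by
  have hfm : Measurable f := hf.measurable
  set S1 : Set ℝ := {t : ℝ | ε < |x - t| ∧ |x - t| ≤ 1} with hS1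
  set S2 : Set ℝ := {t : ℝ | 1 < |x - t|} with hS2
  have habs : Measurable fun t : ℝ => |x - t| := (measurable_const.sub measurable_id).abs
  have hm1 : MeasurableSet S1 :=
    (measurableSet_lt measurable_const habs).inter (measurableSet_le habs measurable_const)
  have hm2 : MeasurableSet S2 := measurableSet_lt measurable_const habs
  have hSu : {t : ℝ | ε < |x - t|} = S1 ∪ S2 := by
    ext t
    simp only [hS1, hS2, mem_setOf_eq, mem_union]
    constructor
    · intro h
      rcases le_or_gt |x - t| 1 with h1 | h1
      · exact Or.inl ⟨h, h1⟩
      · exact Or.inr h1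
    · rintro (⟨h, _⟩ | h)
      · exact h
      · exact lt_of_le_of_lt hε1 h
  have hdisj : Disjoint S1 S2 := by
    rw [Set.disjoint_left]
    rintro t ⟨_, h1⟩ h2
    exact absurd h1 (not_le.2 h2)
  have hS1sub : S1 ⊆ Icc (x - 1) (x + 1) := by
    rintro t ⟨_, h1⟩
    rcases abs_le.1 h1 with ⟨ha, hb⟩
    constructor <;> linarith
  have hS1fin : volume S1 < ⊤ :=
    lt_of_le_of_lt (measure_mono hS1sub) measure_Icc_lt_top
  have hS1vol : (volume S1).toReal ≤ 2 := by
    have h1 : volume S1 ≤ volume (Icc (x - 1) (x + 1)) := measure_mono hS1sub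
    have h2 : volume (Icc (x - 1) (x + 1)) = ENNReal.ofReal 2 := by
      rw [Real.volume_Icc]; norm_num
    calc (volume S1).toReal ≤ (volume (Icc (x - 1) (x + 1))).toReal := by
          apply ENNReal.toReal_mono _ h1
          rw [h2]; exact ENNReal.ofReal_ne_top
      _ = 2 := by rw [h2]; simp
  have hmeasq : AEStronglyMeasurable (fun t => f t / (x - t)) volume :=
    (hfm.div (measurable_const.sub measurable_id)).aestronglyMeasurable
  -- nonvanishing on S1
  have hne : ∀ t ∈ S1, x - t ≠ 0 := by
    rintro t ⟨h, _⟩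
    intro h0
    rw [h0] at h
    simp at h
    linarith
  -- bound for q1 on S1
  have hq1bd : ∀ t ∈ S1, |(f t - f x) / (x - t)| ≤ M := by
    rintro t ⟨h, h1⟩
    have hpos : (0:ℝ) < |x - t| := lt_trans hε h
    rw [abs_div, div_le_iff₀ hpos]
    calc |f t - f x| ≤ M * |t - x| := hLip x t
      _ = M * |x - t| := by rw [abs_sub_comm]
  -- integrability on S1
  have hi1 : IntegrableOn (fun t => (f t - f x) / (x - t)) S1 volume := by
    apply Measure.integrableOn_of_bounded hS1fin.ne
      ((hfm.sub measurable_const).div (measurable_const.sub measurable_id)).aestronglyMeasurable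
    rw [ae_restrict_iff' hm1]
    exact ae_of_all _ fun t ht => by
      simpa [Real.norm_eq_abs, abs_div] using hq1bd t ht
  have hi2 : IntegrableOn (fun t => f x * (x - t)⁻¹) S1 volume := by
    apply Measure.integrableOn_of_bounded (M := |f x| * ε⁻¹) hS1fin.ne
      (measurable_const.mul (measurable_const.sub measurable_id).inv).aestronglyMeasurable
    rw [ae_restrict_iff' hm1]
    refine ae_of_all _ fun t ht => ?_
    rcases ht with ⟨h, _⟩
    have hpos : (0:ℝ) < |x - t| := lt_trans hε h
    show ‖f x * (x - t)⁻¹‖ ≤ |f x| * ε⁻¹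
    rw [Real.norm_eq_abs, abs_mul, abs_inv]
    have hinv : |x - t|⁻¹ ≤ ε⁻¹ := by
      exact inv_anti₀ hε (le_of_lt h)
    exact mul_le_mul_of_nonneg_left hinv (abs_nonneg _)
  have hiS1 : IntegrableOn (fun t => f t / (x - t)) S1 volume := by
    apply IntegrableOn.congr_fun (hi1.add hi2) _ hm1
    intro t ht
    have h0 := hne t ht
    show (f t - f x) / (x - t) + f x * (x - t)⁻¹ = f t / (x - t)
    rw [← div_eq_mul_inv, ← add_div, sub_add_cancel]
  have hiS2 : IntegrableOn (fun t => f t / (x - t)) S2 volume := by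
    apply Integrable.mono' (hfi.abs.integrableOn) (hmeasq.restrict)
    rw [ae_restrict_iff' hm2]
    refine ae_of_all _ fun t ht => ?_
    have h1 : (1:ℝ) < |x - t| := ht
    rw [Real.norm_eq_abs, abs_div]
    exact div_le_self (abs_nonneg _) (le_of_lt h1)
  -- split
  rw [hSu, setIntegral_union hdisj hm2 hiS1 hiS2]
  -- S1 piece
  have hS1eq : ∫ t in S1, f t / (x - t) =
      (∫ t in S1, (f t - f x) / (x - t)) + ∫ t in S1, f x * (x - t)⁻¹ := by
    rw [← integral_add hi1 hi2]
    apply setIntegral_congr_fun hm1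
    intro t ht
    have h0 := hne t ht
    field_simp
    ring
  have hzero : ∫ t in S1, f x * (x - t)⁻¹ = 0 := by
    rw [integral_const_mul, odd_cancel, mul_zero]
  have hS1bd : |∫ t in S1, f t / (x - t)| ≤ 2 * M := by
    rw [hS1eq, hzero, add_zero]
    calc |∫ t in S1, (f t - f x) / (x - t)| ≤ M * (volume S1).toReal := by
          simpa [Real.norm_eq_abs, Measure.real] using
            norm_setIntegral_le_of_norm_le_const (f := fun t => (f t - f x) / (x - t)) hS1fin
              (fun t ht => by simpa [Real.norm_eq_abs, abs_div] using hq1bd t ht)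
      _ ≤ M * 2 := by gcongr
      _ = 2 * M := by ring
  have hS2bd : |∫ t in S2, f t / (x - t)| ≤ ∫ t, |f t| := by
    calc |∫ t in S2, f t / (x - t)| ≤ ∫ t in S2, |f t / (x - t)| := by
          simpa only [Real.norm_eq_abs] using
            norm_integral_le_integral_norm (μ := volume.restrict S2) (fun t => f t / (x - t))
      _ ≤ ∫ t in S2, |f t| := by
          apply setIntegral_mono_on hiS2.abs (hfi.abs.integrableOn) hm2
          intro t ht
          have h1 : (1:ℝ) < |x - t| := ht
          rw [abs_div]
          exact div_le_self (abs_nonneg _) (le_of_lt h1)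
      _ ≤ ∫ t, |f t| := setIntegral_le_integral hfi.abs (ae_of_all _ fun t => abs_nonneg _)
  calc |(∫ t in S1, f t / (x - t)) + ∫ t in S2, f t / (x - t)|
      ≤ |∫ t in S1, f t / (x - t)| + |∫ t in S2, f t / (x - t)| := abs_add_le _ _
    _ ≤ 2 * M + ∫ t, |f t| := add_le_add hS1bd hS2bd

end HilbertMomentAux

/-- for a compactly supported, continuously differentiable `f : ℝ → ℝ` whose
Hilbert transform `H[f]` is well defined pointwise as a principal value,
`∫ x f(x) H[f](x) dx = (1/(2π)) (∫ f)²`. -/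
theorem hilbert_transform_moment_identity (f Hf : ℝ → ℝ)
    (hsupp : HasCompactSupport f) (hreg : ContDiff ℝ 1 f)
    (hH : ∀ x : ℝ,
      Tendsto (fun ε : ℝ =>
          (1 / Real.pi) * ∫ t in {t : ℝ | ε < |x - t|}, f t / (x - t))
        (nhdsWithin 0 (Set.Ioi 0)) (nhds (Hf x))) :
    ∫ x : ℝ, x * f x * Hf x = (1 / (2 * Real.pi)) * (∫ x : ℝ, f x) ^ 2 := by
  have hfc : Continuous f := hreg.continuous
  have hfm : Measurable f := hfc.measurable
  have hfi : Integrable f := hfc.integrable_of_hasCompactSupport hsupp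
  set K : Set ℝ := tsupport f with hK
  have hKc : IsCompact K := hsupp
  obtain ⟨B, hB⟩ := hsupp.exists_bound_of_continuous hfc
  have hB' : ∀ t, |f t| ≤ B := fun t => by simpa [Real.norm_eq_abs] using hB t
  have hB0 : 0 ≤ B := le_trans (abs_nonneg _) (hB' 0)
  -- the function g x = x * f x
  have hgc : Continuous fun x : ℝ => x * f x := continuous_id.mul hfc
  have hgs : HasCompactSupport fun x : ℝ => x * f x := by
    apply HasCompactSupport.intro hKc
    intro x hx
    simp [image_eq_zero_of_notMem_tsupport hx]
  obtain ⟨Bg, hBg⟩ := hgs.exists_bound_of_continuous hgc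
  have hBg' : ∀ t : ℝ, |t * f t| ≤ Bg := fun t => by simpa only [Real.norm_eq_abs] using hBg t
  have hBg0 : 0 ≤ Bg := le_trans (abs_nonneg _) (hBg' 0)
  -- Lipschitz constant
  have hdiff : Differentiable ℝ f := hreg.differentiable one_ne_zero
  obtain ⟨M, hM⟩ := (hsupp.deriv).exists_bound_of_continuous (hreg.continuous_deriv le_rfl)
  have hM0 : 0 ≤ M := le_trans (norm_nonneg _) (hM 0)
  have hLip : ∀ a b : ℝ, |f b - f a| ≤ M * |b - a| := by
    intro a b
    have := convex_univ.norm_image_sub_le_of_norm_deriv_le (fun y _ => hdiff y)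
      (fun y _ => hM y) (mem_univ a) (mem_univ b)
    simpa [Real.norm_eq_abs] using this
  set L1 : ℝ := ∫ t, |f t| with hL1
  have hπ : (0:ℝ) < Real.pi := Real.pi_pos
  -- truncated transform
  set T : ℝ → ℝ → ℝ := fun ε x => ∫ t in {t : ℝ | ε < |x - t|}, f t / (x - t) with hT
  -- the two-variable kernels
  set Φ : ℝ → ℝ × ℝ → ℝ := fun ε =>
    Set.indicator {p : ℝ × ℝ | ε < |p.1 - p.2|}
      (fun p => p.1 * f p.1 * f p.2 / (p.1 - p.2)) with hΦ
  set Ψ : ℝ → ℝ × ℝ → ℝ := fun ε =>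
    Set.indicator {p : ℝ × ℝ | ε < |p.1 - p.2|} (fun p => f p.1 * f p.2) with hΨ
  set μ2 : Measure (ℝ × ℝ) := (volume : Measure ℝ).prod volume with hμ2
  have hsetm : ∀ ε : ℝ, MeasurableSet {p : ℝ × ℝ | ε < |p.1 - p.2|} := fun ε =>
    measurableSet_lt measurable_const (measurable_fst.sub measurable_snd).abs
  have hΦm : ∀ ε, Measurable (Φ ε) := fun ε =>
    Measurable.indicator
      (((measurable_fst.mul (hfm.comp measurable_fst)).mul (hfm.comp measurable_snd)).div
        (measurable_fst.sub measurable_snd)) (hsetm ε)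
  have hΨm : ∀ ε, Measurable (Ψ ε) := fun ε =>
    Measurable.indicator ((hfm.comp measurable_fst).mul (hfm.comp measurable_snd)) (hsetm ε)
  -- pointwise identity relating Φ and T
  have hTker : ∀ ε x : ℝ, x * f x * T ε x = ∫ t, Φ ε (x, t) := by
    intro ε x
    have hmeas : MeasurableSet {t : ℝ | ε < |x - t|} :=
      measurableSet_lt measurable_const (measurable_const.sub measurable_id).abs
    have heq : ∀ t : ℝ, Φ ε (x, t) =
        Set.indicator {t : ℝ | ε < |x - t|} (fun t => x * f x * f t / (x - t)) t := by
      intro t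
      by_cases h : ε < |x - t| <;> simp [hΦ, Set.indicator, h]
    calc x * f x * T ε x = ∫ t in {t : ℝ | ε < |x - t|}, x * f x * (f t / (x - t)) := by
          rw [hT]; exact (integral_const_mul _ _).symm
      _ = ∫ t in {t : ℝ | ε < |x - t|}, x * f x * f t / (x - t) := by
          apply setIntegral_congr_fun hmeas
          intro t _
          ring
      _ = ∫ t, Set.indicator {t : ℝ | ε < |x - t|} (fun t => x * f x * f t / (x - t)) t :=
          (integral_indicator hmeas).symm
      _ = ∫ t, Φ ε (x, t) := by
          apply integral_congr_ae (ae_of_all _ fun t => (heq t).symm)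
  -- integrability of Φ ε
  have hΦi : ∀ ε : ℝ, 0 < ε → Integrable (Φ ε) μ2 := by
    intro ε hε
    have hKKm : MeasurableSet (K ×ˢ K) :=
      (hKc.isClosed.measurableSet).prod (hKc.isClosed.measurableSet)
    have hbint : Integrable ((K ×ˢ K).indicator fun _ => Bg * B * ε⁻¹) μ2 := by
      rw [integrable_indicator_iff hKKm]
      exact (integrableOn_const_iff enorm_ne_top).2 (Or.inr (hKc.prod hKc).measure_lt_top)
    apply Integrable.mono' hbint (hΦm ε).aestronglyMeasurable
    refine ae_of_all _ fun p => ?_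
    by_cases hp : p ∈ K ×ˢ K
    · rw [Set.indicator_of_mem hp]
      by_cases ha : ε < |p.1 - p.2|
      · simp only [hΦ]
        rw [Set.indicator_of_mem (by exact ha)]
        rw [Real.norm_eq_abs, abs_div, abs_mul]
        have h2 : |p.1 * f p.1| * |f p.2| ≤ Bg * B :=
          mul_le_mul (hBg' p.1) (hB' p.2) (abs_nonneg _) hBg0
        have h3 : |p.1 - p.2|⁻¹ ≤ ε⁻¹ := inv_anti₀ hε (le_of_lt ha)
        calc |p.1 * f p.1| * |f p.2| / |p.1 - p.2|
            = |p.1 * f p.1| * |f p.2| * |p.1 - p.2|⁻¹ := by rw [div_eq_mul_inv]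
          _ ≤ Bg * B * ε⁻¹ := by
              apply mul_le_mul h2 h3 (inv_nonneg.2 (abs_nonneg _))
              positivity
      · simp only [hΦ]
        rw [Set.indicator_of_notMem (by exact ha)]
        simp only [norm_zero]
        positivity
    · rw [Set.indicator_of_notMem hp]
      have h0 : p.1 * f p.1 * f p.2 / (p.1 - p.2) = 0 := by
        have : p.1 ∉ K ∨ p.2 ∉ K := by
          by_contra hcon
          push_neg at hcon
          exact hp ⟨hcon.1, hcon.2⟩
        rcases this with h | h <;> simp [image_eq_zero_of_notMem_tsupport h]
      have : Φ ε p = 0 := by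
        simp only [hΦ]
        by_cases ha : p ∈ {p : ℝ × ℝ | ε < |p.1 - p.2|}
        · rw [Set.indicator_of_mem ha]; exact h0
        · exact Set.indicator_of_notMem ha _
      rw [this]; simp
  -- Step B : the symmetrization identity
  have hstepB : ∀ ε : ℝ, 0 < ε →
      ∫ x, x * f x * ((1 / Real.pi) * T ε x) = (1 / (2 * Real.pi)) * ∫ p, Ψ ε p ∂μ2 := by
    intro ε hε
    have hint := hΦi ε hε
    have huncur : Integrable (Function.uncurry fun x t => Φ ε (x, t)) μ2 := by
      have : (Function.uncurry fun x t => Φ ε (x, t)) = Φ ε := by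
        funext p; simp [Function.uncurry]
      rw [this]; exact hint
    have h1 : ∫ x, x * f x * T ε x = ∫ p, Φ ε p ∂μ2 := by
      calc ∫ x, x * f x * T ε x = ∫ x, ∫ t, Φ ε (x, t) :=
            integral_congr_ae (ae_of_all _ fun x => hTker ε x)
        _ = ∫ p : ℝ × ℝ, Φ ε (p.1, p.2) ∂μ2 := integral_integral huncur
        _ = ∫ p, Φ ε p ∂μ2 := by simp
    have hswapi : Integrable (fun p : ℝ × ℝ => Φ ε p.swap) μ2 := hint.swap
    have h2 : ∫ p : ℝ × ℝ, Φ ε p.swap ∂μ2 = ∫ p, Φ ε p ∂μ2 := integral_prod_swap (Φ ε)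
    have hΨsum : ∀ p : ℝ × ℝ, Φ ε p + Φ ε p.swap = Ψ ε p := by
      intro p
      by_cases ha : ε < |p.1 - p.2|
      · have ha' : ε < |p.2 - p.1| := by rwa [abs_sub_comm]
        have hne : p.1 - p.2 ≠ 0 := by
          intro h0
          rw [h0] at ha
          simp at ha
          linarith
        have hne' : p.2 - p.1 ≠ 0 := fun h0 => hne (by linarith)
        simp only [hΦ, hΨ]
        rw [Set.indicator_of_mem (by exact ha), Set.indicator_of_mem (by exact ha'),
          Set.indicator_of_mem (by exact ha)]
        simp only [Prod.fst_swap, Prod.snd_swap]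
        field_simp
        ring
      · have ha' : ¬ ε < |p.2 - p.1| := by rwa [abs_sub_comm]
        simp only [hΦ, hΨ]
        rw [Set.indicator_of_notMem (by exact ha), Set.indicator_of_notMem (by exact ha'),
          Set.indicator_of_notMem (by exact ha)]
        simp
    have h3 : ∫ p, Ψ ε p ∂μ2 = 2 * ∫ p, Φ ε p ∂μ2 := by
      calc ∫ p, Ψ ε p ∂μ2 = ∫ p : ℝ × ℝ, (Φ ε p + Φ ε p.swap) ∂μ2 :=
            integral_congr_ae (ae_of_all _ fun p => (hΨsum p).symm)
        _ = (∫ p, Φ ε p ∂μ2) + ∫ p : ℝ × ℝ, Φ ε p.swap ∂μ2 := integral_add hint hswapi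
        _ = 2 * ∫ p, Φ ε p ∂μ2 := by rw [h2]; ring
    calc ∫ x, x * f x * ((1 / Real.pi) * T ε x)
        = ∫ x, (1 / Real.pi) * (x * f x * T ε x) :=
          integral_congr_ae (ae_of_all _ fun x => by ring)
      _ = (1 / Real.pi) * ∫ x, x * f x * T ε x := integral_const_mul _ _
      _ = (1 / Real.pi) * ∫ p, Φ ε p ∂μ2 := by rw [h1]
      _ = (1 / (2 * Real.pi)) * ∫ p, Ψ ε p ∂μ2 := by
          rw [h3]
          field_simp
  -- Step A : dominated convergence in the x-integral
  have hTm : ∀ ε : ℝ, AEStronglyMeasurable (fun x => x * f x * ((1 / Real.pi) * T ε x)) volume := by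
    intro ε
    have h0 : AEStronglyMeasurable (fun x => ∫ t, Φ ε (x, t)) volume :=
      (hΦm ε).aestronglyMeasurable.integral_prod_right'
    have heq : (fun x => x * f x * ((1 / Real.pi) * T ε x))
        = fun x => (1 / Real.pi) * ∫ t, Φ ε (x, t) := by
      funext x
      rw [← hTker ε x]
      ring
    rw [heq]
    exact h0.const_mul _
  have hboundi : Integrable (fun x => |x * f x| * ((1 / Real.pi) * (2 * M + L1))) volume := by
    have : Integrable (fun x : ℝ => |x * f x|) volume :=
      (hgc.integrable_of_hasCompactSupport hgs).abs
    exact this.mul_const _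
  have hstepA : Tendsto (fun ε => ∫ x, x * f x * ((1 / Real.pi) * T ε x))
      (nhdsWithin 0 (Set.Ioi 0)) (nhds (∫ x, x * f x * Hf x)) := by
    apply tendsto_integral_filter_of_dominated_convergence
      (fun x => |x * f x| * ((1 / Real.pi) * (2 * M + L1)))
      (Eventually.of_forall hTm) ?_ hboundi ?_
    · filter_upwards [Ioc_mem_nhdsGT (show (0:ℝ) < 1 from one_pos)]
        with ε hε
      refine ae_of_all _ fun x => ?_
      have hTb : |T ε x| ≤ 2 * M + L1 :=
        HilbertMomentAux.abs_trunc_le f hfc hfi hM0 hB' hLip hε.1 hε.2 x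
      have h1 : |1 / Real.pi * T ε x| ≤ 1 / Real.pi * (2 * M + L1) := by
        rw [abs_mul, abs_of_nonneg (by positivity : (0:ℝ) ≤ 1 / Real.pi)]
        exact mul_le_mul_of_nonneg_left hTb (by positivity)
      rw [Real.norm_eq_abs, abs_mul]
      exact mul_le_mul_of_nonneg_left h1 (abs_nonneg _)
    · refine ae_of_all _ fun x => ?_
      exact (hH x).const_mul (x * f x)
  -- Step C : dominated convergence for Ψ
  have hdiag : μ2 {p : ℝ × ℝ | p.1 = p.2} = 0 := by
    have hm : MeasurableSet {p : ℝ × ℝ | p.1 = p.2} :=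
      measurableSet_eq_fun measurable_fst measurable_snd
    rw [hμ2, Measure.prod_apply hm]
    have hfib : ∀ x : ℝ, volume (Prod.mk x ⁻¹' {p : ℝ × ℝ | p.1 = p.2}) = 0 := by
      intro x
      have : (Prod.mk x ⁻¹' {p : ℝ × ℝ | p.1 = p.2}) = {x} := by
        ext t
        simp [eq_comm]
      rw [this]
      exact Real.volume_singleton
    simp [hfib]
  have hstepC : Tendsto (fun ε => ∫ p, Ψ ε p ∂μ2) (nhdsWithin 0 (Set.Ioi 0))
      (nhds ((∫ x, f x) ^ 2)) := by
    have hlim : ∫ p : ℝ × ℝ, f p.1 * f p.2 ∂μ2 = (∫ x, f x) ^ 2 := by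
      rw [hμ2, integral_prod_mul]
      ring
    rw [← hlim]
    apply tendsto_integral_filter_of_dominated_convergence (fun p => |f p.1 * f p.2|)
      (Eventually.of_forall fun ε => (hΨm ε).aestronglyMeasurable) ?_ ?_ ?_
    · refine Eventually.of_forall fun ε => ae_of_all _ fun p => ?_
      have := norm_indicator_le_norm_self
        (s := {p : ℝ × ℝ | ε < |p.1 - p.2|}) (fun p : ℝ × ℝ => f p.1 * f p.2) p
      simpa only [Real.norm_eq_abs, hΨ] using this
    · exact (hfi.mul_prod hfi).abs
    · have hne : ∀ᵐ p : ℝ × ℝ ∂μ2, p.1 ≠ p.2 := by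
        rw [ae_iff]
        convert hdiag using 2
        ext p
        simp
      filter_upwards [hne] with p hp
      have hpos : 0 < |p.1 - p.2| := abs_pos.2 (sub_ne_zero.2 hp)
      have hev : ∀ᶠ ε in nhdsWithin (0:ℝ) (Set.Ioi 0), Ψ ε p = f p.1 * f p.2 := by
        filter_upwards [Ioo_mem_nhdsGT
          (show (0:ℝ) < |p.1 - p.2| from hpos)] with ε hε
        rw [hΨ]
        exact Set.indicator_of_mem (by exact hε.2) _
      exact tendsto_const_nhds.congr' (hev.mono fun ε h => h.symm)
  -- conclusion
  have hBev : ∀ᶠ ε in nhdsWithin (0:ℝ) (Set.Ioi 0),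
      ∫ x, x * f x * ((1 / Real.pi) * T ε x) = (1 / (2 * Real.pi)) * ∫ p, Ψ ε p ∂μ2 := by
    filter_upwards [self_mem_nhdsWithin] with ε hε
    exact hstepB ε hε
  have h2 : Tendsto (fun ε => ∫ x, x * f x * ((1 / Real.pi) * T ε x))
      (nhdsWithin 0 (Set.Ioi 0)) (nhds ((1 / (2 * Real.pi)) * (∫ x, f x) ^ 2)) :=
    (hstepC.const_mul (1 / (2 * Real.pi))).congr' (hBev.mono fun ε h => h.symm)
  exact tendsto_nhds_unique hstepA h2
end

section
/- Let f : ℝ → ℝ be compactly supported and sufficiently regular (e.g. continuously differentiable), with ∫ |f(x)/x| dx < ∞, and suppose its Hilbert transform H[f] is well defined, i.e. for every x ∈ ℝ the principal value (1/π) lim_{ε→0⁺} ∫_{|x−t|>ε} f(t)/(x−t) dt exists and equals H[f](x). Then ∫_ℝ (H[f](x)/x) f(x) dx = −(1/(2π)) (∫_ℝ f(x)/x dx)². -/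
open MeasureTheory Filter

private lemma hilb_intOn_div {f : ℝ → ℝ} (hfi : Integrable f) (hfm : Measurable f)
    (x ε : ℝ) (hε : 0 < ε) (S : Set ℝ) (hS : MeasurableSet S)
    (hsub : ∀ t ∈ S, ε ≤ |x - t|) :
    IntegrableOn (fun t => f t / (x - t)) S := by
  have hm : Measurable fun t : ℝ => f t / (x - t) :=
    hfm.div (measurable_const.sub measurable_id)
  refine Integrable.mono ((hfi.norm.div_const ε).restrict (s := S))
    hm.aestronglyMeasurable.restrict ?_
  rw [ae_restrict_iff' hS]
  filter_upwards with t ht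
  have h1 : ε ≤ |x - t| := hsub t ht
  have h2 : (0:ℝ) < |x - t| := lt_of_lt_of_le hε h1
  simp only [Real.norm_eq_abs, abs_div, abs_abs]
  rw [abs_of_pos hε]
  exact div_le_div_of_nonneg_left (abs_nonneg _) hε h1

private lemma hilb_norm_le {f : ℝ → ℝ} (hfi : Integrable f) (hfm : Measurable f)
    (x ε : ℝ) (hε : 0 < ε) (S : Set ℝ) (hS : MeasurableSet S)
    (hsub : ∀ t ∈ S, ε ≤ |x - t|) :
    |∫ t in S, f t / (x - t)| ≤ (∫ t, |f t|) / ε := by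
  have hio := hilb_intOn_div hfi hfm x ε hε S hS hsub
  calc |∫ t in S, f t / (x - t)| ≤ ∫ t in S, |f t / (x - t)| := by
        simpa only [Real.norm_eq_abs] using
          norm_integral_le_integral_norm (μ := volume.restrict S) (fun t => f t / (x - t))
    _ ≤ ∫ t in S, |f t| / ε := by
        refine setIntegral_mono_on hio.norm ((hfi.norm.div_const ε).integrableOn) hS ?_
        intro t ht
        rw [abs_div]
        exact div_le_div_of_nonneg_left (abs_nonneg _) hε (hsub t ht)
    _ ≤ ∫ t, |f t| / ε := by
        refine setIntegral_le_integral (hfi.norm.div_const ε) ?_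
        filter_upwards with t; positivity
    _ = (∫ t, |f t|) / ε := by rw [integral_div]

private lemma hilb_refl_zero (x ε R : ℝ) :
    ∫ t : ℝ, Set.indicator {t : ℝ | ε < |x - t| ∧ |x - t| ≤ R} (fun t => (x - t)⁻¹) t = 0 := by
  set q : ℝ → ℝ := Set.indicator {t : ℝ | ε < |x - t| ∧ |x - t| ≤ R} (fun t => (x - t)⁻¹) with hq
  have key : ∀ t, q (2 * x - t) = - q t := by
    intro t
    have habs : |x - (2 * x - t)| = |x - t| := by
      rw [abs_sub_comm x t]; congr 1; ring
    simp only [hq, Set.indicator_apply, Set.mem_setOf_eq, habs]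
    by_cases h : ε < |x - t| ∧ |x - t| ≤ R
    · simp only [if_pos h]
      rw [show x - (2 * x - t) = -(x - t) by ring, inv_neg]
    · simp [if_neg h]
  have h1 : ∫ t : ℝ, q (2 * x - t) = ∫ t : ℝ, q t := by
    have h2 : ∫ t : ℝ, q (2 * x + t) = ∫ t : ℝ, q t :=
      integral_add_left_eq_self q (2 * x)
    have h3 : ∫ t : ℝ, q (2 * x + -t) = ∫ t : ℝ, q (2 * x + t) :=
      integral_neg_eq_self (fun t => q (2 * x + t)) volume
    simp only [← sub_eq_add_neg] at h3
    rw [h3, h2]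
  simp only [key, integral_neg] at h1
  linarith

private lemma hilb_gbound {f : ℝ → ℝ} {L : NNReal} (hfi : Integrable f) (hfm : Measurable f)
    (hL : LipschitzWith L f) :
    ∀ ε > (0:ℝ), ∀ x : ℝ, |∫ t in {t : ℝ | ε < |x - t|}, f t / (x - t)|
      ≤ 2 * L + ∫ t, |f t| := by
  intro ε hε x
  have hM0 : 0 ≤ ∫ t : ℝ, |f t| := integral_nonneg fun t => abs_nonneg _
  set M : ℝ := ∫ t : ℝ, |f t| with hM
  have habs_cont : Continuous fun t : ℝ => |x - t| :=
    (continuous_const.sub continuous_id).abs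
  have hSmeas : MeasurableSet {t : ℝ | ε < |x - t|} :=
    (isOpen_lt continuous_const habs_cont).measurableSet
  by_cases h1 : 1 ≤ ε
  · -- far case: |x - t| > ε ≥ 1
    have := hilb_norm_le hfi hfm x 1 one_pos _ hSmeas
      (fun t ht => le_trans h1 (le_of_lt ht))
    calc |∫ t in {t : ℝ | ε < |x - t|}, f t / (x - t)| ≤ M / 1 := this
      _ = M := by ring
      _ ≤ 2 * L + M := by nlinarith [NNReal.coe_nonneg L]
  · push_neg at h1
    set S₁ : Set ℝ := {t : ℝ | ε < |x - t| ∧ |x - t| ≤ 1} with hS₁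
    set S₂ : Set ℝ := {t : ℝ | 1 < |x - t|} with hS₂
    have hS₁meas : MeasurableSet S₁ :=
      ((isOpen_lt continuous_const habs_cont).measurableSet).inter
        (measurableSet_le habs_cont.measurable measurable_const)
    have hS₂meas : MeasurableSet S₂ :=
      (isOpen_lt continuous_const habs_cont).measurableSet
    have hdisj : Disjoint S₁ S₂ := by
      rw [Set.disjoint_left]
      rintro t ⟨-, h2⟩ h3
      exact absurd h3 (not_lt.mpr h2)
    have hunion : {t : ℝ | ε < |x - t|} = S₁ ∪ S₂ := by
      ext t
      simp only [Set.mem_setOf_eq, Set.mem_union, hS₁, hS₂, Set.mem_setOf_eq]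
      constructor
      · intro h; rcases le_or_gt |x - t| 1 with h2 | h2
        · exact Or.inl ⟨h, h2⟩
        · exact Or.inr h2
      · rintro (⟨h, -⟩ | h); · exact h
        · exact lt_trans h1 h
    -- finite measure of S₁
    have hS₁sub : S₁ ⊆ Set.Icc (x - 1) (x + 1) := by
      rintro t ⟨-, h2⟩
      rw [abs_le] at h2
      constructor <;> linarith [h2.1, h2.2]
    have hS₁vol : volume S₁ < ⊤ :=
      lt_of_le_of_lt (measure_mono hS₁sub) (by rw [Real.volume_Icc]; exact ENNReal.ofReal_lt_top)
    have hS₁vol2 : (volume S₁).toReal ≤ 2 := by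
      have := ENNReal.toReal_mono (by rw [Real.volume_Icc]; exact ENNReal.ofReal_ne_top)
        (measure_mono hS₁sub)
      rw [Real.volume_Icc, ENNReal.toReal_ofReal (by linarith)] at this
      linarith
    -- integrability pieces
    have hio1 : IntegrableOn (fun t => f t / (x - t)) S₁ :=
      hilb_intOn_div hfi hfm x ε hε S₁ hS₁meas (fun t ht => le_of_lt ht.1)
    have hio2 : IntegrableOn (fun t => f t / (x - t)) S₂ :=
      hilb_intOn_div hfi hfm x 1 one_pos S₂ hS₂meas (fun t ht => le_of_lt ht)
    have hsplit : ∫ t in {t : ℝ | ε < |x - t|}, f t / (x - t)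
        = (∫ t in S₁, f t / (x - t)) + ∫ t in S₂, f t / (x - t) := by
      rw [hunion]
      exact setIntegral_union hdisj hS₂meas hio1 hio2
    -- on S₁ : decompose
    have hioD : IntegrableOn (fun t => (f t - f x) / (x - t)) S₁ := by
      refine Measure.integrableOn_of_bounded (M := (L:ℝ)) hS₁vol.ne
        ((hfm.sub measurable_const).div
          (measurable_const.sub measurable_id)).aestronglyMeasurable ?_
      rw [ae_restrict_iff' hS₁meas]
      filter_upwards with t ht
      have hne : x - t ≠ 0 := by
        intro h0
        have ht1 : ε < |x - t| := ht.1
        rw [h0, abs_zero] at ht1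
        exact absurd ht1 (not_lt.mpr (le_of_lt hε))
      rw [Real.norm_eq_abs, abs_div, div_le_iff₀ (abs_pos.mpr hne)]
      calc |f t - f x| ≤ L * |t - x| := by
            simpa [Real.dist_eq] using hL.dist_le_mul t x
        _ = L * |x - t| := by rw [abs_sub_comm]
    have hioC : IntegrableOn (fun t => f x * (x - t)⁻¹) S₁ := by
      refine Measure.integrableOn_of_bounded (M := |f x| / ε) hS₁vol.ne
        (measurable_const.mul
          (measurable_const.sub measurable_id).inv).aestronglyMeasurable ?_
      rw [ae_restrict_iff' hS₁meas]
      filter_upwards with t ht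
      have hpos : (0:ℝ) < |x - t| := lt_trans hε ht.1
      rw [Real.norm_eq_abs, abs_mul, abs_inv]
      rw [div_eq_mul_inv]
      exact mul_le_mul_of_nonneg_left
        (inv_anti₀ hε (le_of_lt ht.1)) (abs_nonneg _)
    have hdecomp : ∫ t in S₁, f t / (x - t)
        = (∫ t in S₁, (f t - f x) / (x - t)) + ∫ t in S₁, f x * (x - t)⁻¹ := by
      rw [← integral_add hioD hioC]
      refine setIntegral_congr_fun hS₁meas fun t _ => ?_
      show f t / (x - t) = (f t - f x) / (x - t) + f x * (x - t)⁻¹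
      rw [← div_eq_mul_inv, ← add_div, sub_add_cancel]
    have hzero : ∫ t in S₁, f x * (x - t)⁻¹ = 0 := by
      rw [integral_const_mul, ← integral_indicator hS₁meas, hS₁]
      rw [hilb_refl_zero x ε 1, mul_zero]
    have hb1 : |∫ t in S₁, (f t - f x) / (x - t)| ≤ 2 * L := by
      have hle := norm_setIntegral_le_of_norm_le_const (μ := volume) (C := (L:ℝ))
        hS₁vol (f := fun t => (f t - f x) / (x - t)) ?_
      · rw [Real.norm_eq_abs] at hle
        calc |∫ t in S₁, (f t - f x) / (x - t)| ≤ (L:ℝ) * (volume S₁).toReal := hle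
          _ ≤ (L:ℝ) * 2 := by
              exact mul_le_mul_of_nonneg_left hS₁vol2 (NNReal.coe_nonneg L)
          _ = 2 * L := by ring
      · intro t ht
        have hne : x - t ≠ 0 := by
          intro h0
          have ht1 : ε < |x - t| := ht.1
          rw [h0, abs_zero] at ht1
          exact absurd ht1 (not_lt.mpr (le_of_lt hε))
        rw [Real.norm_eq_abs, abs_div, div_le_iff₀ (abs_pos.mpr hne)]
        calc |f t - f x| ≤ L * |t - x| := by
              simpa [Real.dist_eq] using hL.dist_le_mul t x
          _ = L * |x - t| := by rw [abs_sub_comm]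
    have hb2 : |∫ t in S₂, f t / (x - t)| ≤ M := by
      have := hilb_norm_le hfi hfm x 1 one_pos S₂ hS₂meas (fun t ht => le_of_lt ht)
      simpa using this
    calc |∫ t in {t : ℝ | ε < |x - t|}, f t / (x - t)|
        = |(∫ t in S₁, (f t - f x) / (x - t)) + ∫ t in S₂, f t / (x - t)| := by
          rw [hsplit, hdecomp, hzero, add_zero]
      _ ≤ |∫ t in S₁, (f t - f x) / (x - t)| + |∫ t in S₂, f t / (x - t)| := abs_add_le _ _
      _ ≤ 2 * L + M := add_le_add hb1 hb2

private lemma hilb_sym {f : ℝ → ℝ} (hfi : Integrable f) (hfm : Measurable f)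
    (hint : Integrable fun x : ℝ => f x / x) (ε : ℝ) (hε : 0 < ε) :
    ∫ x : ℝ, (f x / x) * ∫ t in {t : ℝ | ε < |x - t|}, f t / (x - t)
      = -(1/2) * ∫ p : ℝ × ℝ, Set.indicator {p : ℝ × ℝ | ε < |p.1 - p.2|}
          (fun p => (f p.1 / p.1) * (f p.2 / p.2)) p := by
  set E : Set (ℝ × ℝ) := {p : ℝ × ℝ | ε < |p.1 - p.2|} with hE
  have hEmeas : MeasurableSet E :=
    (isOpen_lt continuous_const ((continuous_fst.sub continuous_snd).abs)).measurableSet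
  set K : ℝ × ℝ → ℝ := E.indicator (fun p => (f p.1 / p.1) * (f p.2 / (p.1 - p.2))) with hK
  set K' : ℝ × ℝ → ℝ := E.indicator (fun p => (f p.2 / p.2) * (f p.1 / (p.2 - p.1))) with hK'
  set Hh : ℝ × ℝ → ℝ := E.indicator (fun p => (f p.1 / p.1) * (f p.2 / p.2)) with hHh
  have hKmeas : Measurable K :=
    (((hfm.comp measurable_fst).div measurable_fst).mul
      ((hfm.comp measurable_snd).div (measurable_fst.sub measurable_snd))).indicator hEmeas
  have hK'meas : Measurable K' :=
    (((hfm.comp measurable_snd).div measurable_snd).mul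
      ((hfm.comp measurable_fst).div (measurable_snd.sub measurable_fst))).indicator hEmeas
  have hKint : Integrable K := by
    have hbd : Integrable (fun p : ℝ × ℝ => |f p.1 / p.1| * (|f p.2| / ε)) := by
      rw [Measure.volume_eq_prod]
      exact hint.abs.mul_prod (hfi.abs.div_const ε)
    refine hbd.mono hKmeas.aestronglyMeasurable ?_
    filter_upwards with p
    rw [Real.norm_eq_abs, Real.norm_eq_abs,
      abs_of_nonneg (by positivity : (0:ℝ) ≤ |f p.1 / p.1| * (|f p.2| / ε))]
    by_cases hp : p ∈ E
    · rw [hK, Set.indicator_of_mem hp]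
      have hd : ε < |p.1 - p.2| := hp
      rw [abs_mul]
      refine mul_le_mul_of_nonneg_left ?_ (abs_nonneg _)
      rw [abs_div]
      exact div_le_div_of_nonneg_left (abs_nonneg _) hε (le_of_lt hd)
    · rw [hK, Set.indicator_of_notMem hp, abs_zero]
      positivity
  have hK'int : Integrable K' := by
    have hbd : Integrable (fun p : ℝ × ℝ => (|f p.1| / ε) * |f p.2 / p.2|) := by
      rw [Measure.volume_eq_prod]
      exact (hfi.abs.div_const ε).mul_prod hint.abs
    refine hbd.mono hK'meas.aestronglyMeasurable ?_
    filter_upwards with p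
    rw [Real.norm_eq_abs, Real.norm_eq_abs,
      abs_of_nonneg (by positivity : (0:ℝ) ≤ (|f p.1| / ε) * |f p.2 / p.2|)]
    by_cases hp : p ∈ E
    · rw [hK', Set.indicator_of_mem hp]
      have hd : ε < |p.1 - p.2| := hp
      have hd' : ε ≤ |p.2 - p.1| := by rw [abs_sub_comm]; exact le_of_lt hd
      rw [abs_mul, mul_comm]
      refine mul_le_mul_of_nonneg_right ?_ (abs_nonneg _)
      rw [abs_div]
      exact div_le_div_of_nonneg_left (abs_nonneg _) hε hd'
    · rw [hK', Set.indicator_of_notMem hp, abs_zero]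
      positivity
  -- inner integral identity
  have hinner : ∀ x : ℝ, (∫ t : ℝ, K (x, t))
      = (f x / x) * ∫ t in {t : ℝ | ε < |x - t|}, f t / (x - t) := by
    intro x
    have hptw : ∀ t : ℝ, K (x, t)
        = Set.indicator {t : ℝ | ε < |x - t|} (fun t => (f x / x) * (f t / (x - t))) t := by
      intro t
      simp only [hK, Set.indicator_apply, hE, Set.mem_setOf_eq]
    have hSmeas : MeasurableSet {t : ℝ | ε < |x - t|} :=
      (isOpen_lt continuous_const ((continuous_const.sub continuous_id).abs)).measurableSet
    rw [show (fun t : ℝ => K (x, t)) = fun t =>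
      Set.indicator {t : ℝ | ε < |x - t|} (fun t => (f x / x) * (f t / (x - t))) t
      from funext hptw]
    rw [integral_indicator hSmeas, integral_const_mul]
  -- Fubini
  have hA : (∫ x : ℝ, (f x / x) * ∫ t in {t : ℝ | ε < |x - t|}, f t / (x - t))
      = ∫ p : ℝ × ℝ, K p := by
    rw [Measure.volume_eq_prod] at hKint ⊢
    rw [integral_prod K hKint]
    exact (integral_congr_ae (Filter.Eventually.of_forall
      (fun x => (hinner x)))).symm
  -- swap
  have hKswap : ∀ p : ℝ × ℝ, K' p = K p.swap := by
    intro p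
    simp only [hK, hK', Set.indicator_apply, hE, Set.mem_setOf_eq, Prod.fst_swap,
      Prod.snd_swap, Prod.swap]
    rw [abs_sub_comm p.2 p.1]
  have hswap : ∫ p : ℝ × ℝ, K' p = ∫ p : ℝ × ℝ, K p := by
    rw [show (fun p : ℝ × ℝ => K' p) = fun p => K p.swap from funext hKswap]
    rw [Measure.volume_eq_prod]
    exact integral_prod_swap K
  -- a.e. identity
  have hNnull : ∀ᵐ p : ℝ × ℝ, p.1 ≠ 0 ∧ p.2 ≠ 0 := by
    have h1 : volume ({(0:ℝ)} ×ˢ (Set.univ : Set ℝ)) = 0 := by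
      rw [Measure.volume_eq_prod, Measure.prod_prod]; simp
    have h2 : volume ((Set.univ : Set ℝ) ×ˢ {(0:ℝ)}) = 0 := by
      rw [Measure.volume_eq_prod, Measure.prod_prod]; simp
    have hsub : {p : ℝ × ℝ | ¬(p.1 ≠ 0 ∧ p.2 ≠ 0)}
        ⊆ ({(0:ℝ)} ×ˢ (Set.univ : Set ℝ)) ∪ ((Set.univ : Set ℝ) ×ˢ {(0:ℝ)}) := by
      intro p hp
      simp only [Set.mem_setOf_eq, not_and_or, not_not] at hp
      rcases hp with h | h
      · exact Or.inl (by simp [Set.mem_prod, h])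
      · exact Or.inr (by simp [Set.mem_prod, h])
    rw [ae_iff]
    exact measure_mono_null hsub (measure_union_null h1 h2)
  have hae : (fun p : ℝ × ℝ => K p + K' p) =ᵐ[volume] fun p => -Hh p := by
    filter_upwards [hNnull] with p hp
    by_cases hmem : p ∈ E
    · have hd : ε < |p.1 - p.2| := hmem
      have hdne : p.1 - p.2 ≠ 0 := by
        intro h0; rw [h0, abs_zero] at hd; exact absurd hd (not_lt.mpr (le_of_lt hε))
      rw [hK, hK', hHh, Set.indicator_of_mem hmem, Set.indicator_of_mem hmem,
        Set.indicator_of_mem hmem]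
      have h1 := hp.1; have h2 := hp.2
      have hdne' : p.2 - p.1 ≠ 0 := by intro h0; apply hdne; linarith
      field_simp
      ring
    · rw [hK, hK', hHh, Set.indicator_of_notMem hmem, Set.indicator_of_notMem hmem,
        Set.indicator_of_notMem hmem]
      simp
  have htwice : (∫ p : ℝ × ℝ, K p) + ∫ p : ℝ × ℝ, K' p = -∫ p : ℝ × ℝ, Hh p := by
    rw [← integral_add hKint hK'int, integral_congr_ae hae, integral_neg]
  rw [hA]
  rw [hswap] at htwice
  have : ∫ p : ℝ × ℝ, K p = -(1/2) * ∫ p : ℝ × ℝ, Hh p := by linarith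
  exact this

/-- for a compactly supported, continuously differentiable `f : ℝ → ℝ` with
`∫ |f(x)/x| dx < ∞` and whose Hilbert transform `H[f]` is well defined pointwise as a
principal value, `∫ (H[f](x)/x) f(x) dx = −(1/(2π)) (∫ f(x)/x dx)²`. -/
theorem hilbert_transform_inverse_moment_identity (f Hf : ℝ → ℝ)
    (hsupp : HasCompactSupport f) (hreg : ContDiff ℝ 1 f)
    (hint : Integrable (fun x : ℝ => f x / x))
    (hH : ∀ x : ℝ,
      Tendsto (fun ε : ℝ =>
          (1 / Real.pi) * ∫ t in {t : ℝ | ε < |x - t|}, f t / (x - t))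
        (nhdsWithin 0 (Set.Ioi 0)) (nhds (Hf x))) :
    ∫ x : ℝ, (Hf x / x) * f x = -(1 / (2 * Real.pi)) * (∫ x : ℝ, f x / x) ^ 2 := by
  have hfc : Continuous f := hreg.continuous
  have hfm : Measurable f := hfc.measurable
  have hfi : Integrable f := hfc.integrable_of_hasCompactSupport hsupp
  obtain ⟨L, hL⟩ := hreg.lipschitzWith_of_hasCompactSupport hsupp one_ne_zero
  have hπ : (0:ℝ) < Real.pi := Real.pi_pos
  set M : ℝ := ∫ t : ℝ, |f t| with hM
  set C : ℝ := 2 * L + M with hC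
  have hC0 : 0 ≤ C := by
    have hM0 : 0 ≤ M := integral_nonneg fun t => abs_nonneg _
    have := NNReal.coe_nonneg L
    nlinarith
  set c : ℝ := ∫ x : ℝ, f x / x with hc
  set l : Filter ℝ := nhdsWithin 0 (Set.Ioi 0) with hl
  set g : ℝ → ℝ → ℝ := fun ε x => ∫ t in {t : ℝ | ε < |x - t|}, f t / (x - t) with hg
  -- measurability of g ε
  have hgm : ∀ ε : ℝ, AEStronglyMeasurable (g ε) volume := by
    intro ε
    have hEmeas : MeasurableSet {p : ℝ × ℝ | ε < |p.1 - p.2|} :=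
      (isOpen_lt continuous_const ((continuous_fst.sub continuous_snd).abs)).measurableSet
    set K₀ : ℝ × ℝ → ℝ := Set.indicator {p : ℝ × ℝ | ε < |p.1 - p.2|}
      (fun p => f p.2 / (p.1 - p.2)) with hK₀
    have hK₀m : Measurable K₀ :=
      ((hfm.comp measurable_snd).div (measurable_fst.sub measurable_snd)).indicator hEmeas
    have hsm : StronglyMeasurable fun x : ℝ => ∫ t, K₀ (x, t) :=
      hK₀m.stronglyMeasurable.integral_prod_right'
    have heq : g ε = fun x : ℝ => ∫ t, K₀ (x, t) := by
      funext x
      have hSmeas : MeasurableSet {t : ℝ | ε < |x - t|} :=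
        (isOpen_lt continuous_const ((continuous_const.sub continuous_id).abs)).measurableSet
      have hptw : ∀ t : ℝ, K₀ (x, t)
          = Set.indicator {t : ℝ | ε < |x - t|} (fun t => f t / (x - t)) t := by
        intro t
        simp only [hK₀, Set.indicator_apply, Set.mem_setOf_eq]
      rw [show (fun t : ℝ => K₀ (x, t)) = fun t =>
        Set.indicator {t : ℝ | ε < |x - t|} (fun t => f t / (x - t)) t from funext hptw]
      rw [integral_indicator hSmeas]
    rw [heq]
    exact hsm.aestronglyMeasurable
  -- limit of the symmetric double integral
  have hB : Tendsto (fun ε : ℝ => ∫ p : ℝ × ℝ,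
      Set.indicator {p : ℝ × ℝ | ε < |p.1 - p.2|}
        (fun p => (f p.1 / p.1) * (f p.2 / p.2)) p) l (nhds (c ^ 2)) := by
    have hval : ∫ p : ℝ × ℝ, (f p.1 / p.1) * (f p.2 / p.2) = c ^ 2 := by
      rw [Measure.volume_eq_prod, pow_two]
      exact integral_prod_mul (fun x : ℝ => f x / x) (fun x : ℝ => f x / x)
    rw [← hval]
    refine tendsto_integral_filter_of_dominated_convergence
      (fun p : ℝ × ℝ => |f p.1 / p.1| * |f p.2 / p.2|) ?_ ?_ ?_ ?_
    · refine Filter.Eventually.of_forall fun ε => ?_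
      have hEmeas : MeasurableSet {p : ℝ × ℝ | ε < |p.1 - p.2|} :=
        (isOpen_lt continuous_const ((continuous_fst.sub continuous_snd).abs)).measurableSet
      exact ((((hfm.comp measurable_fst).div measurable_fst).mul
        ((hfm.comp measurable_snd).div measurable_snd)).indicator hEmeas).aestronglyMeasurable
    · refine Filter.Eventually.of_forall fun ε => ?_
      refine Filter.Eventually.of_forall fun p => ?_
      rw [Real.norm_eq_abs]
      by_cases hp : p ∈ {p : ℝ × ℝ | ε < |p.1 - p.2|}
      · rw [Set.indicator_of_mem hp, abs_mul]
      · rw [Set.indicator_of_notMem hp, abs_zero]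
        positivity
    · rw [Measure.volume_eq_prod]
      exact hint.abs.mul_prod hint.abs
    · have hdiag : volume {p : ℝ × ℝ | p.1 = p.2} = 0 := by
        rw [Measure.volume_eq_prod]
        rw [Measure.measure_prod_null
          ((isClosed_eq continuous_fst continuous_snd).measurableSet)]
        refine Filter.Eventually.of_forall fun x => ?_
        have hpre : Prod.mk x ⁻¹' {p : ℝ × ℝ | p.1 = p.2} = {x} := by
          ext t; simp [eq_comm]
        show volume (Prod.mk x ⁻¹' {p : ℝ × ℝ | p.1 = p.2}) = 0
        rw [hpre]
        exact Real.volume_singleton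
      have hae : ∀ᵐ p : ℝ × ℝ, p.1 ≠ p.2 := by
        rw [ae_iff]
        simpa using hdiag
      filter_upwards [hae] with p hp
      have hd : 0 < |p.1 - p.2| := abs_pos.mpr (sub_ne_zero.mpr hp)
      refine Tendsto.congr' ?_ tendsto_const_nhds
      have hmem : Set.Ioo (0:ℝ) |p.1 - p.2| ∈ l :=
        Ioo_mem_nhdsGT hd
      filter_upwards [hmem] with ε hε
      rw [Set.indicator_of_mem (by exact hε.2 : p ∈ {p : ℝ × ℝ | ε < |p.1 - p.2|})]
  -- dominated convergence for the left-hand side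
  have hCt : Tendsto (fun ε : ℝ => ∫ x : ℝ, (f x / x) * ((1 / Real.pi) * g ε x)) l
      (nhds (∫ x : ℝ, (f x / x) * Hf x)) := by
    refine tendsto_integral_filter_of_dominated_convergence
      (fun x : ℝ => |f x / x| * ((1 / Real.pi) * C)) ?_ ?_ ?_ ?_
    · refine Filter.Eventually.of_forall fun ε => ?_
      exact (hfm.div measurable_id).aestronglyMeasurable.mul ((hgm ε).const_mul _)
    · have hev : ∀ᶠ ε : ℝ in l, ε ∈ Set.Ioi (0:ℝ) := self_mem_nhdsWithin
      filter_upwards [hev] with ε hε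
      refine Filter.Eventually.of_forall fun x => ?_
      rw [Real.norm_eq_abs, abs_mul]
      refine mul_le_mul_of_nonneg_left ?_ (abs_nonneg _)
      rw [abs_mul, abs_of_pos (by positivity : (0:ℝ) < 1 / Real.pi)]
      refine mul_le_mul_of_nonneg_left ?_ (by positivity)
      exact hilb_gbound hfi hfm hL ε hε x
    · exact hint.abs.mul_const _
    · refine Filter.Eventually.of_forall fun x => ?_
      exact (hH x).const_mul (f x / x)
  -- identify the limit
  have hfinal : Tendsto (fun ε : ℝ => ∫ x : ℝ, (f x / x) * ((1 / Real.pi) * g ε x)) l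
      (nhds ((1 / Real.pi) * (-(1/2) * c ^ 2))) := by
    have h1 : (fun ε : ℝ => ∫ x : ℝ, (f x / x) * ((1 / Real.pi) * g ε x)) =ᶠ[l]
        fun ε => (1 / Real.pi) * (-(1/2) * ∫ p : ℝ × ℝ,
          Set.indicator {p : ℝ × ℝ | ε < |p.1 - p.2|}
            (fun p => (f p.1 / p.1) * (f p.2 / p.2)) p) := by
      filter_upwards [self_mem_nhdsWithin] with ε hε
      have h2 : ∫ x : ℝ, (f x / x) * ((1 / Real.pi) * g ε x)
          = (1 / Real.pi) * ∫ x : ℝ, (f x / x) * g ε x := by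
        rw [← integral_const_mul]
        congr 1; funext x; ring
      rw [h2, hilb_sym hfi hfm hint ε hε]
    rw [Filter.tendsto_congr' h1]
    exact ((hB.const_mul (-(1/2))).const_mul (1 / Real.pi))
  have hkey : ∫ x : ℝ, (f x / x) * Hf x = (1 / Real.pi) * (-(1/2) * c ^ 2) :=
    tendsto_nhds_unique hCt hfinal
  have hre : (fun x : ℝ => (Hf x / x) * f x) = fun x : ℝ => (f x / x) * Hf x := by
    funext x; ring
  rw [hre, hkey]
  have h3 : -(1 / (2 * Real.pi)) = 1 / Real.pi * (-(1/2)) := by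
    field_simp
  rw [h3, mul_assoc]
end
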